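/- Let G be a cubic graph with an orientation D admitting a circular nowhere-zero r-flow for some real r ≥ 2, and let V₁ be the set of vertices of out-degree 1 in D. Then the subgraph of G induced by V₁ contains no cycle. -/

import Mathlib

open SimpleGraph

/-- A cubic graph: every vertex has degree 3. -/
def IsCubic {V : Type*} [Fintype V] (G : SimpleGraph V) : Prop :=
  ∀ v : V, Nat.card (G.neighborSet v) = 3

/-- A circular nowhere-zero `r`-flow: an orientation `dir` of `G` together with
a flow value `f` on each directed edge, with values in `[1, r-1]` and flow
conservation at every vertex. -/
structure CNZF {V : Type*} [Fintype V] (G : SimpleGraph V) (r : ℝ) where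
  dir : V → V → Bool
  f : V → V → ℝ
  orients : ∀ u v, G.Adj u v ↔ (dir u v = true ∨ dir v u = true)
  asymm : ∀ u v, dir u v = true → dir v u = false
  lb : ∀ u v, dir u v = true → 1 ≤ f u v
  ub : ∀ u v, dir u v = true → f u v ≤ r - 1
  conserv : ∀ v : V, (∑ u : V, if dir v u = true then f v u else 0)
      = ∑ u : V, if dir u v = true then f u v else 0

/-- Out-degree of a vertex in an orientation. -/
noncomputable def outDeg {V : Type*} (dir : V → V → Bool) (v : V) : ℕ :=
  Nat.card {u | dir v u = true}

/-- Every connected component of the subgraph induced by `S` is a tree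
on at most `m` vertices. -/
def MonoOK {V : Type*} (G : SimpleGraph V) (m : ℕ) (S : Set V) : Prop :=
  (G.induce S).IsAcyclic ∧
    ∀ c : (G.induce S).ConnectedComponent, Nat.card c.supp ≤ m

/-- A `k`-weak bisection, given by its first part `S`. -/
def IsWeakBisection {V : Type*} [Fintype V] (G : SimpleGraph V) (k : ℕ) (S : Set V) : Prop :=
  Nat.card S = Nat.card (Sᶜ : Set V) ∧ MonoOK G (k-2) S ∧ MonoOK G (k-2) (Sᶜ : Set V)

/-- Every monochromatic component of the 2-coloring `c` has at most `m` vertices. -/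
def MonoAtMost {V : Type*} (G : SimpleGraph V) (c : V → Bool) (m : ℕ) : Prop :=
  ∀ b : Bool, ∀ comp : (G.induce {v | c v = b}).ConnectedComponent,
    Nat.card comp.supp ≤ m

/-- Edges of `L_k` (on vertex labels `0, …, 5+2k`): `L_0` is `K_{3,3}` minus an
edge (parts `{0,1,4}` and `{2,3,5}`, edge `45` removed, degree-2 vertices `4,5`);
at step `j` the two new adjacent vertices `4+2j, 5+2j` are attached to the
previous degree-2 vertices `2+2j, 3+2j`. The degree-2 vertices of `L_k` are
`4+2k` and `5+2k`. -/
def LEdge (k : ℕ) (a b : ℕ) : Prop :=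
  (a, b) ∈ ({(0,2),(0,3),(0,5),(1,2),(1,3),(1,5),(4,2),(4,3)} : Set (ℕ × ℕ)) ∨
  ∃ j, 1 ≤ j ∧ j ≤ k ∧
    ((a, b) = (4+2*j, 5+2*j) ∨ (a, b) = (2+2*j, 4+2*j) ∨ (a, b) = (3+2*j, 5+2*j))

/-- The graph `L_k`. -/
def Lgraph (k : ℕ) : SimpleGraph (Fin (6+2*k)) :=
  SimpleGraph.fromRel (fun a b => LEdge k a.val b.val)

/-- Edges of `T_k`: one copy of `L'_k` (the copy of `L_k` on `0..5+2k` with apex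
`6+2k`), two copies of `L'_0` (on `7+2k..12+2k` with apex `13+2k`, and on
`14+2k..19+2k` with apex `20+2k`), and a central vertex `21+2k` adjacent to the
three apexes. -/
def TEdge (k : ℕ) (a b : ℕ) : Prop :=
  LEdge k a b
  ∨ (a = 6+2*k ∧ (b = 4+2*k ∨ b = 5+2*k))
  ∨ (∃ a' b', LEdge 0 a' b' ∧ a = 7+2*k+a' ∧ b = 7+2*k+b')
  ∨ (a = 13+2*k ∧ (b = 11+2*k ∨ b = 12+2*k))
  ∨ (∃ a' b', LEdge 0 a' b' ∧ a = 14+2*k+a' ∧ b = 14+2*k+b')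
  ∨ (a = 20+2*k ∧ (b = 18+2*k ∨ b = 19+2*k))
  ∨ (a = 21+2*k ∧ (b = 6+2*k ∨ b = 13+2*k ∨ b = 20+2*k))

/-- The cubic graph `T_k`. -/
def Tgraph (k : ℕ) : SimpleGraph (Fin (22+2*k)) :=
  SimpleGraph.fromRel (fun a b => TEdge k a.val b.val)

/-- A valid factor of `G`: a spanning subgraph all of whose components are paths
or cycles (equivalently, all degrees are 1 or 2), such that the two endpoints
(degree-1 vertices) of every odd component are non-adjacent in `G`; in particular
no component is an isolated vertex. -/
def IsValidFactor {V : Type*} (G H : SimpleGraph V) : Prop :=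
  H ≤ G ∧
  (∀ v : V, 1 ≤ Nat.card (H.neighborSet v) ∧ Nat.card (H.neighborSet v) ≤ 2) ∧
  ∀ c : H.ConnectedComponent, Odd (Nat.card c.supp) →
    ∀ u v : V, u ∈ c.supp → v ∈ c.supp → u ≠ v →
      Nat.card (H.neighborSet u) = 1 → Nat.card (H.neighborSet v) = 1 → ¬ G.Adj u v

/-- A component of `H` is a cycle iff all its vertices have degree 2 in `H`. -/
def IsCycleComp {V : Type*} (H : SimpleGraph V) (c : H.ConnectedComponent) : Prop :=
  ∀ v ∈ c.supp, Nat.card (H.neighborSet v) = 2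

/-- An odd cycle component. -/
def OddCycleComp {V : Type*} (H : SimpleGraph V) (c : H.ConnectedComponent) : Prop :=
  Odd (Nat.card c.supp) ∧ IsCycleComp H c

/-- An odd path component (a component with an odd number of vertices containing
a degree-1 vertex). -/
def OddPathComp {V : Type*} (H : SimpleGraph V) (c : H.ConnectedComponent) : Prop :=
  Odd (Nat.card c.supp) ∧ ∃ v ∈ c.supp, Nat.card (H.neighborSet v) = 1

noncomputable def numComponents {V : Type*} (H : SimpleGraph V) : ℕ := Nat.card H.ConnectedComponent

noncomputable def numOddCycles {V : Type*} (H : SimpleGraph V) : ℕ :=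
  Nat.card {c : H.ConnectedComponent // OddCycleComp H c}

/-- `H` is a valid factor of `G` with the minimum number of components. -/
def MinimizesComponents {V : Type*} (G H : SimpleGraph V) : Prop :=
  IsValidFactor G H ∧ ∀ H' : SimpleGraph V, IsValidFactor G H' →
    numComponents H ≤ numComponents H'

/-- `H` is a valid factor of `G` minimizing the number of components and,
subject to that, the number of odd cycles. -/
def IsMinValidFactor {V : Type*} (G H : SimpleGraph V) : Prop :=
  MinimizesComponents G H ∧
  ∀ H' : SimpleGraph V, IsValidFactor G H' →
    numComponents H' = numComponents H → numOddCycles H ≤ numOddCycles H'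

/-- An external vertex of a factor: an endpoint of a path component, or a vertex
of an odd cycle component. -/
def ExternalVtx {V : Type*} (H : SimpleGraph V) (v : V) : Prop :=
  Nat.card (H.neighborSet v) = 1 ∨ OddCycleComp H (H.connectedComponentMk v)

section Aux

open SimpleGraph Walk

variable {V : Type*}

/-- In a cycle, every vertex of the support has two distinct neighbors in the
subgraph of the cycle. -/
lemma cycle_two_neighbors {H : SimpleGraph V} {v : V} (p : H.Walk v v)
    (hp : p.IsCycle) {m : V} (hm : m ∈ p.support) :
    ∃ b c, b ≠ c ∧ p.toSubgraph.Adj m b ∧ p.toSubgraph.Adj m c := by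
  classical
  set q : H.Walk m m := p.rotate m hm with hqdef
  have hq : q.IsCycle := hp.rotate hm
  have hqsub : q.toSubgraph = p.toSubgraph := p.toSubgraph_rotate hm
  obtain ⟨b, hadj, q', hq'⟩ := (Walk.not_nil_iff).mp hq.not_nil
  have hcyc : q'.IsPath ∧ s(m, b) ∉ q'.edges := by
    rw [← Walk.cons_isCycle_iff (h := hadj)]
    rwa [← hq']
  have hmb : m ≠ b := hadj.ne
  have hrevnil : ¬ q'.reverse.Nil := Walk.not_nil_of_ne hmb
  obtain ⟨cc, hadj2, r, hr⟩ := (Walk.not_nil_iff).mp hrevnil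
  have hmcedge : s(m, cc) ∈ q'.edges := by
    have : s(m, cc) ∈ q'.reverse.edges := by
      rw [hr, Walk.edges_cons]; exact List.mem_cons_self
    rwa [Walk.edges_reverse, List.mem_reverse] at this
  have hbc : b ≠ cc := by
    rintro rfl
    exact hcyc.2 hmcedge
  refine ⟨b, cc, hbc, ?_, ?_⟩
  · rw [← hqsub]
    rw [← SimpleGraph.Subgraph.mem_edgeSet, q.mem_edges_toSubgraph]
    rw [hq', Walk.edges_cons]
    exact List.mem_cons_self
  · rw [← hqsub]
    rw [← SimpleGraph.Subgraph.mem_edgeSet, q.mem_edges_toSubgraph]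
    rw [hq', Walk.edges_cons]
    exact List.mem_cons_of_mem _ hmcedge

variable [Fintype V] {G : SimpleGraph V} {r : ℝ}

/-- Total outflow at a vertex. -/
noncomputable def outFlow (c : CNZF G r) (v : V) : ℝ :=
  ∑ u : V, if c.dir v u = true then c.f v u else 0

lemma outSet_eq_singleton (c : CNZF G r) {u v : V} (hu : outDeg c.dir u = 1)
    (huv : c.dir u v = true) : {w | c.dir u w = true} = {v} := by
  have h1 : ({w | c.dir u w = true} : Set V).ncard = 1 := by
    have h := hu
    unfold outDeg at h
    rwa [Nat.card_coe_set_eq] at h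
  obtain ⟨a, ha⟩ := Set.ncard_eq_one.mp h1
  have hv : v ∈ ({w | c.dir u w = true} : Set V) := huv
  rw [ha] at hv ⊢
  rw [Set.mem_singleton_iff] at hv
  rw [hv]

lemma outFlow_eq (c : CNZF G r) {u v : V} (hu : outDeg c.dir u = 1)
    (huv : c.dir u v = true) : outFlow c u = c.f u v := by
  have hs := outSet_eq_singleton c hu huv
  unfold outFlow
  rw [Finset.sum_eq_single_of_mem v (Finset.mem_univ v)]
  · rw [if_pos huv]
  · intro b _ hb
    rw [if_neg]
    intro hdir
    have : b ∈ ({w | c.dir u w = true} : Set V) := hdir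
    rw [hs, Set.mem_singleton_iff] at this
    exact hb this

/-- Key lemma: an edge directed from one out-degree-1 vertex to another
strictly increases the outflow by at least 1. -/
lemma outFlow_lt (hG : IsCubic G) (c : CNZF G r) {u v : V}
    (hu : outDeg c.dir u = 1) (hv : outDeg c.dir v = 1)
    (huv : c.dir u v = true) : outFlow c u + 1 ≤ outFlow c v := by
  classical
  -- the in-set of v has two elements
  set A : Set V := {w | c.dir w v = true} with hA
  have hnbr : G.neighborSet v = {w | c.dir v w = true} ∪ A := by
    ext w
    simp only [mem_neighborSet, Set.mem_union, Set.mem_setOf_eq, hA]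
    exact c.orients v w
  have hdisj : Disjoint ({w | c.dir v w = true} : Set V) A := by
    rw [Set.disjoint_left]
    intro w hw1 hw2
    have := c.asymm v w hw1
    simp only [hA, Set.mem_setOf_eq] at hw2
    rw [this] at hw2
    exact Bool.false_ne_true hw2
  have h3 : (G.neighborSet v).ncard = 3 := by
    have h := hG v
    rwa [Nat.card_coe_set_eq] at h
  have h1 : ({w | c.dir v w = true} : Set V).ncard = 1 := by
    have h := hv
    unfold outDeg at h
    rwa [Nat.card_coe_set_eq] at h
  have hA2 : A.ncard = 2 := by
    have := Set.ncard_union_eq hdisj (Set.toFinite _) (Set.toFinite _)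
    rw [← hnbr, h3, h1] at this
    omega
  have huA : u ∈ A := huv
  obtain ⟨a, b, hab, hAab⟩ := Set.ncard_eq_two.mp hA2
  -- find the second in-neighbor w ≠ u
  obtain ⟨w, hwA, hwu⟩ : ∃ w, w ∈ A ∧ w ≠ u := by
    rw [hAab] at huA
    rcases huA with rfl | rfl
    · exact ⟨b, by rw [hAab]; simp, hab.symm⟩
    · exact ⟨a, by rw [hAab]; simp, hab⟩
  have hwv : c.dir w v = true := hwA
  -- outflow of v equals inflow of v
  have hcons := c.conserv v
  have hge : c.f u v + c.f w v ≤ ∑ x : V, if c.dir x v = true then c.f x v else 0 := by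
    have hsub : ({u, w} : Finset V) ⊆ Finset.univ := Finset.subset_univ _
    have hpair : ∑ x ∈ ({u, w} : Finset V), (if c.dir x v = true then c.f x v else 0)
        = c.f u v + c.f w v := by
      rw [Finset.sum_pair (Ne.symm hwu)]
      rw [if_pos huv, if_pos hwv]
    rw [← hpair]
    apply Finset.sum_le_sum_of_subset_of_nonneg hsub
    intro x _ _
    split_ifs with hx
    · linarith [c.lb x v hx]
    · exact le_refl 0
  have h1w : (1 : ℝ) ≤ c.f w v := c.lb w v hwv
  have hfu : outFlow c u = c.f u v := outFlow_eq c hu huv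
  have : outFlow c v = ∑ x : V, if c.dir x v = true then c.f x v else 0 := hcons
  rw [this, hfu]
  linarith

end Aux

/-- The set of vertices of out-degree 1 in an orientation with a circular
nowhere-zero r-flow induces a forest. -/
theorem stmt2 {V : Type*} [Fintype V] (G : SimpleGraph V) (r : ℝ) (hr : 2 ≤ r)
    (hG : IsCubic G) (c : CNZF G r) :
    (G.induce {v | outDeg c.dir v = 1}).IsAcyclic := by
  classical
  set S : Set V := {v | outDeg c.dir v = 1} with hS
  intro v p hp
  -- choose a vertex of the cycle with minimal outflow
  have hne : (p.support.toFinset : Finset ↥S).Nonempty :=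
    ⟨v, by rw [List.mem_toFinset]; exact p.start_mem_support⟩
  obtain ⟨m, hmt, hmin⟩ := Finset.exists_min_image p.support.toFinset
    (fun x => outFlow c (x : V)) hne
  rw [List.mem_toFinset] at hmt
  obtain ⟨b, d, hbd, hab, had⟩ := cycle_two_neighbors p hp hmt
  have hbsupp : b ∈ p.support := by
    have := hab.snd_mem
    rwa [p.mem_verts_toSubgraph] at this
  have hdsupp : d ∈ p.support := by
    have := had.snd_mem
    rwa [p.mem_verts_toSubgraph] at this
  have hminb : outFlow c (m : V) ≤ outFlow c (b : V) :=
    hmin b (List.mem_toFinset.mpr hbsupp)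
  have hmind : outFlow c (m : V) ≤ outFlow c (d : V) :=
    hmin d (List.mem_toFinset.mpr hdsupp)
  have hadjb : G.Adj (m : V) (b : V) := hab.adj_sub
  have hadjd : G.Adj (m : V) (d : V) := had.adj_sub
  have hmS : outDeg c.dir (m : V) = 1 := m.2
  have hbS : outDeg c.dir (b : V) = 1 := b.2
  have hdS : outDeg c.dir (d : V) = 1 := d.2
  -- both edges must be directed out of m
  have hdirb : c.dir (m : V) (b : V) = true := by
    rcases (c.orients (m : V) (b : V)).mp hadjb with h | h
    · exact h
    · exact absurd hminb (by linarith [outFlow_lt hG c hbS hmS h])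
  have hdird : c.dir (m : V) (d : V) = true := by
    rcases (c.orients (m : V) (d : V)).mp hadjd with h | h
    · exact h
    · exact absurd hmind (by linarith [outFlow_lt hG c hdS hmS h])
  -- but m has out-degree 1
  have hsb := outSet_eq_singleton c hmS hdirb
  have hd' : (d : V) ∈ ({w | c.dir (m : V) w = true} : Set V) := hdird
  rw [hsb, Set.mem_singleton_iff] at hd'
  exact hbd (Subtype.ext hd'.symm) |>.elim
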